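/- Let S be a finite set with |S| = n ≥ 3 and let 2 ≤ r ≤ n − 1. Let 𝓒 be a collection of r-subsets of S such that any two distinct X, Y ∈ 𝓒 satisfy |X ∩ Y| ≤ r − 2, and set 𝓑 := {A ⊆ S : |A| = r, A ∉ 𝓒}. Then for all B₁, B₂ ∈ 𝓑 and every x ∈ B₁ \ B₂, there exists y ∈ B₂ \ B₁ such that (B₁ \ {x}) ∪ {y} ∈ 𝓑. -/

import Mathlib

open Set

namespace Matroid

variable {α : Type*}

/-- A circuit of a matroid: a minimal dependent set. -/
def Circuit' (M : Matroid α) (C : Set α) : Prop :=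
  M.Dep C ∧ ∀ D, D ⊂ C → M.Indep D

/-- The rank of a subset `X`: the maximum cardinality of an independent subset of `X`. -/
noncomputable def rk' (M : Matroid α) (X : Set α) : ℕ :=
  sSup {n | ∃ I, I ⊆ X ∧ M.Indep I ∧ I.ncard = n}

/-- A hyperplane of a matroid of rank `r`: a maximal subset of the ground set of rank `r - 1`. -/
def Hyperplane' (M : Matroid α) (H : Set α) : Prop :=
  H ⊆ M.E ∧ M.rk' H = M.rk' M.E - 1 ∧
    ∀ Y, H ⊂ Y → Y ⊆ M.E → M.rk' Y ≠ M.rk' M.E - 1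

/-- A matroid is paving if it has no circuits of cardinality less than its rank. -/
def Paving (M : Matroid α) : Prop :=
  ∀ C, M.Circuit' C → M.rk' M.E ≤ C.ncard

/-- A matroid is sparse-paving if both it and its dual are paving. -/
def SparsePaving (M : Matroid α) : Prop :=
  M.Paving ∧ M✶.Paving

end Matroid

theorem stmt9 {α : Type*} (S : Set α) (hS : S.Finite) (n r : ℕ) (hn : S.ncard = n)
    (hn3 : 3 ≤ n) (hr2 : 2 ≤ r) (hrn : r ≤ n - 1)
    (C : Set (Set α)) (hsub : ∀ X ∈ C, X ⊆ S ∧ X.ncard = r)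
    (hint : ∀ X ∈ C, ∀ Y ∈ C, X ≠ Y → (X ∩ Y).ncard ≤ r - 2)
    (B : Set (Set α)) (hB : B = {A | A ⊆ S ∧ A.ncard = r ∧ A ∉ C}) :
    ∀ B₁ ∈ B, ∀ B₂ ∈ B, ∀ x ∈ B₁ \ B₂,
      ∃ y ∈ B₂ \ B₁, (B₁ \ {x}) ∪ {y} ∈ B := by
  subst hB
  rintro B₁ ⟨hB₁S, hB₁r, hB₁C⟩ B₂ ⟨hB₂S, hB₂r, hB₂C⟩ x ⟨hx1, hx2⟩
  have hB₁f : B₁.Finite := hS.subset hB₁S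
  have hB₂f : B₂.Finite := hS.subset hB₂S
  -- B₂ \ B₁ nonempty
  have hne : (B₂ \ B₁).Nonempty := by
    by_contra h
    rw [Set.not_nonempty_iff_eq_empty, Set.diff_eq_empty] at h
    have : B₂ = B₁ := Set.eq_of_subset_of_ncard_le h (by omega) hB₁f
    exact hx2 (this ▸ hx1)
  -- cardinality of B₁ \ {x}
  have hcard1 : (B₁ \ {x}).ncard = r - 1 := by
    rw [Set.ncard_diff_singleton_of_mem hx1, hB₁r]
  have hkey : ∀ y ∈ B₂ \ B₁, ((B₁ \ {x}) ∪ {y}).ncard = r ∧ (B₁ \ {x}) ∪ {y} ⊆ S := by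
    rintro y ⟨hy2, hy1⟩
    constructor
    · rw [Set.union_singleton, Set.ncard_insert_of_notMem (fun h => hy1 h.1)
        ((hB₁f.subset Set.diff_subset))]
      omega
    · exact Set.union_subset (Set.diff_subset.trans hB₁S) (by simpa using hB₂S hy2)
  by_contra hcon
  push_neg at hcon
  have hC : ∀ y ∈ B₂ \ B₁, (B₁ \ {x}) ∪ {y} ∈ C := by
    intro y hy
    have := hcon y hy
    have h2 := hkey y hy
    by_contra h
    exact this ⟨h2.2, h2.1, h⟩
  obtain ⟨y, hy⟩ := hne
  by_cases h2 : ∃ y' ∈ B₂ \ B₁, y' ≠ y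
  · obtain ⟨y', hy', hne'⟩ := h2
    have hCy := hC y hy
    have hCy' := hC y' hy'
    have hneq : (B₁ \ {x}) ∪ {y} ≠ (B₁ \ {x}) ∪ {y'} := by
      intro h
      have : y ∈ (B₁ \ {x}) ∪ {y'} := h ▸ (Set.mem_union_right _ rfl)
      rcases this with h' | h'
      · exact hy.2 h'.1
      · exact hne' h'.symm
    have hle := hint _ hCy _ hCy' hneq
    have hsub2 : B₁ \ {x} ⊆ ((B₁ \ {x}) ∪ {y}) ∩ ((B₁ \ {x}) ∪ {y'}) :=
      Set.subset_inter Set.subset_union_left Set.subset_union_left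
    have := Set.ncard_le_ncard hsub2 (((hB₁f.subset Set.diff_subset).union (Set.finite_singleton y)).subset Set.inter_subset_left)
    omega
  · -- B₂ \ B₁ = {y}
    push_neg at h2
    have hdiff : B₂ \ B₁ = {y} := by
      apply Set.eq_singleton_iff_unique_mem.mpr ⟨hy, h2⟩
    -- show B₂ = (B₁ \ {x}) ∪ {y}
    have hcap : B₂ ∩ B₁ ⊆ B₁ \ {x} := fun z hz => ⟨hz.2, fun h => hx2 (h ▸ hz.1)⟩
    have hcapcard : (B₂ ∩ B₁).ncard = r - 1 := by
      have := Set.ncard_inter_add_ncard_diff_eq_ncard B₂ B₁ hB₂f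
      rw [hdiff, Set.ncard_singleton, hB₂r] at this
      omega
    have hcapeq : B₂ ∩ B₁ = B₁ \ {x} :=
      Set.eq_of_subset_of_ncard_le hcap (by omega) (hB₁f.subset Set.diff_subset)
    have hB₂eq : B₂ = (B₁ \ {x}) ∪ {y} := by
      rw [← hcapeq, ← hdiff]
      ext z
      simp only [Set.mem_union, Set.mem_inter_iff, Set.mem_diff]
      tauto
    exact hB₂C (hB₂eq ▸ hC y hy)
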